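/- arXiv:0903.0645 — 9 statements merged into one kernel-verified Lean document; each statement's English description precedes it below -/
import Mathlib

section
/- Let Σ be a real positive definite p×p matrix with modified Cholesky decomposition Σ = L D Lᵀ, where L is lower triangular with unit diagonal and D is diagonal. Then for any row index i and any c < i, the entries σ_{i,1} = σ_{i,2} = ⋯ = σ_{i,c} = 0 if and only if l_{i,1} = l_{i,2} = ⋯ = l_{i,c} = 0; that is, (∀ m ≤ c, σ_{i,m} = 0) ↔ (∀ m ≤ c, l_{i,m} = 0). -/
open Matrix

/-- For a positive definite `Σ = L D Lᵀ` (modified Cholesky decomposition),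
a leading segment of zeros in a row of `Σ` below the diagonal corresponds exactly to a
leading segment of zeros in the same row of `L`. (Indices are 0-based.) -/
theorem cholesky_row_zero_iff
    (p : ℕ) (S L D : Matrix (Fin p) (Fin p) ℝ)
    (hS : S.PosDef)
    (hL_lower : ∀ i j : Fin p, i < j → L i j = 0)
    (hL_diag : ∀ i : Fin p, L i i = 1)
    (hD_diag : ∀ i j : Fin p, i ≠ j → D i j = 0)
    (hdecomp : S = L * D * Lᵀ)
    (i c : Fin p) (hci : c < i) :
    (∀ m : Fin p, m ≤ c → S i m = 0) ↔ (∀ m : Fin p, m ≤ c → L i m = 0) := by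
  -- entrywise formula
  have hSentry : ∀ a b : Fin p, S a b = ∑ k, L a k * D k k * L b k := by
    intro a b
    have hD : D = Matrix.diagonal (fun k => D k k) := by
      ext x y
      by_cases h : x = y
      · subst h; simp
      · simp [Matrix.diagonal_apply_ne _ h, hD_diag x y h]
    rw [hdecomp, hD]
    simp only [Matrix.mul_apply, Matrix.transpose_apply]
    refine Finset.sum_congr rfl fun k _ => ?_
    congr 1
    simp [Matrix.diagonal_apply, mul_ite, Finset.sum_ite_eq]
  -- determinant of L
  have hdetL : L.det = 1 := by
    rw [Matrix.det_of_lowerTriangular L (fun a b h => hL_lower a b h)]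
    simp [hL_diag]
  have hdetLT : Lᵀ.det = 1 := by rw [Matrix.det_transpose]; exact hdetL
  have hunit : IsUnit Lᵀ.det := by rw [hdetLT]; exact isUnit_one
  -- positivity of diagonal of D
  have hDpos : ∀ m : Fin p, 0 < D m m := by
    intro m
    set x : Fin p → ℝ := (Lᵀ)⁻¹ *ᵥ Pi.single m 1 with hx
    have hLTx : Lᵀ *ᵥ x = Pi.single m 1 := by
      rw [hx, Matrix.mulVec_mulVec, Matrix.mul_nonsing_inv _ hunit, Matrix.one_mulVec]
    have hxne : x ≠ 0 := by
      intro h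
      have : (Pi.single m 1 : Fin p → ℝ) = 0 := by rw [← hLTx, h, Matrix.mulVec_zero]
      have := congrFun this m
      simp at this
    have := hS.dotProduct_mulVec_pos hxne
    have hval : star x ⬝ᵥ S *ᵥ x = D m m := by
      rw [hdecomp]
      have : (L * D * Lᵀ) *ᵥ x = L *ᵥ (D *ᵥ (Lᵀ *ᵥ x)) := by
        simp [Matrix.mulVec_mulVec, Matrix.mul_assoc]
      rw [this, hLTx]
      rw [Matrix.dotProduct_mulVec]
      have hxL : star x ᵥ* L = Pi.single m 1 := by
        have : star x = x := by simp
        rw [this, ← Matrix.mulVec_transpose, hLTx]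
      rw [hxL]
      simp [Matrix.mulVec, dotProduct, Pi.single_apply]
    rw [hval] at this
    exact this
  constructor
  · -- forward
    intro hSz
    have key : ∀ n : ℕ, ∀ m : Fin p, m.val = n → m ≤ c → L i m = 0 := by
      intro n
      induction n using Nat.strong_induction_on with
      | _ n ih =>
        intro m hmn hmc
        have hSm : S i m = 0 := hSz m hmc
        rw [hSentry] at hSm
        have hsum : ∑ k, L i k * D k k * L m k = L i m * D m m * L m m := by
          apply Finset.sum_eq_single m
          · intro k _ hk
            rcases lt_or_gt_of_ne hk with h | h
            · have : L i k = 0 := ih k.val (by omega) k rfl (le_trans (le_of_lt h) hmc)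
              rw [this]; ring
            · rw [hL_lower m k h]; ring
          · intro h; exact absurd (Finset.mem_univ m) h
        rw [hsum, hL_diag m, mul_one] at hSm
        rcases mul_eq_zero.mp hSm with h | h
        · exact h
        · exact absurd h (ne_of_gt (hDpos m))
    intro m hmc
    exact key m.val m rfl hmc
  · -- backward
    intro hLz m hmc
    rw [hSentry]
    apply Finset.sum_eq_zero
    intro k _
    rcases le_or_gt k m with h | h
    · rw [hLz k (le_trans h hmc)]; ring
    · rw [hL_lower m k h]; ring
end

section
/- Let Ω be a real positive definite p×p matrix with modified Cholesky decomposition Ω = Tᵀ D⁻¹ T, where T is lower triangular with unit diagonal and D is diagonal with positive diagonal entries. Then for any column index j and any r > j, the entries ω_{r,j} = ω_{r+1,j} = ⋯ = ω_{p,j} = 0 if and only if t_{r,j} = t_{r+1,j} = ⋯ = t_{p,j} = 0; that is, (∀ m with r ≤ m ≤ p, ω_{m,j} = 0) ↔ (∀ m with r ≤ m ≤ p, t_{m,j} = 0). -/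
open Matrix

/-- For a positive definite `Ω = Tᵀ D⁻¹ T` (modified Cholesky decomposition
of the inverse covariance), a trailing segment of zeros in a column of `Ω` below the
diagonal corresponds exactly to a trailing segment of zeros in that column of `T`. -/
theorem inverse_cholesky_column_zero_iff
    (p : ℕ) (Om T D : Matrix (Fin p) (Fin p) ℝ)
    (hOm : Om.PosDef)
    (hT_lower : ∀ i j : Fin p, i < j → T i j = 0)
    (hT_diag : ∀ i : Fin p, T i i = 1)
    (hD_diag : ∀ i j : Fin p, i ≠ j → D i j = 0)
    (hD_pos : ∀ i : Fin p, 0 < D i i)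
    (hdecomp : Om = Tᵀ * D⁻¹ * T)
    (j r : Fin p) (hjr : j < r) :
    (∀ m : Fin p, r ≤ m → Om m j = 0) ↔ (∀ m : Fin p, r ≤ m → T m j = 0) := by
  have hD : D = Matrix.diagonal (fun i => D i i) := by
    ext i k
    by_cases h : i = k
    · subst h; simp [Matrix.diagonal]
    · simp [Matrix.diagonal, h, hD_diag i k h]
  have hDinv : D⁻¹ = Matrix.diagonal (fun i => (D i i)⁻¹) := by
    apply Matrix.inv_eq_right_inv
    ext i k
    rw [Matrix.mul_diagonal]
    by_cases h : i = k
    · subst h; simp [mul_inv_cancel₀ (ne_of_gt (hD_pos i)), Matrix.one_apply]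
    · simp [hD_diag i k h, Matrix.one_apply, h]
  have hentry : ∀ a b : Fin p, Om a b = ∑ k, T k a * (D k k)⁻¹ * T k b := by
    intro a b
    rw [hdecomp, hDinv, Matrix.mul_apply]
    simp only [Matrix.mul_diagonal, Matrix.transpose_apply]
  constructor
  · intro h
    have key : ∀ n : ℕ, ∀ m : Fin p, p - m.val ≤ n → r ≤ m → T m j = 0 := by
      intro n
      induction n with
      | zero =>
        intro m hm _
        exact absurd hm (by have := m.isLt; omega)
      | succ n ih =>
        intro m hm hrm
        have hOmm : Om m j = 0 := h m hrm
        rw [hentry m j] at hOmm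
        rw [← Finset.add_sum_erase _ _ (Finset.mem_univ m)] at hOmm
        have hrest : ∑ k ∈ Finset.univ.erase m, T k m * (D k k)⁻¹ * T k j = 0 := by
          apply Finset.sum_eq_zero
          intro k hk
          have hkm : k ≠ m := Finset.ne_of_mem_erase hk
          rcases lt_or_gt_of_ne hkm with hlt | hgt
          · rw [hT_lower k m hlt]; ring
          · have : T k j = 0 := by
              apply ih k _ (le_of_lt (lt_of_le_of_lt hrm hgt))
              have := hgt
              have hk' : m.val < k.val := this
              omega
            rw [this]; ring
        rw [hrest, add_zero, hT_diag m, one_mul] at hOmm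
        have hne : (D m m)⁻¹ ≠ 0 := inv_ne_zero (ne_of_gt (hD_pos m))
        exact (mul_eq_zero.mp hOmm).resolve_left hne
    intro m hrm
    exact key (p - m.val) m le_rfl hrm
  · intro h m hrm
    rw [hentry m j]
    apply Finset.sum_eq_zero
    intro k _
    rcases lt_or_ge k m with hlt | hle
    · rw [hT_lower k m hlt]; ring
    · rw [h k (le_trans hrm hle)]; ring
end

section
/- Let Ω be a real positive definite p×p matrix with modified Cholesky decomposition Ω = Tᵀ D⁻¹ T, where T is lower triangular with unit diagonal and D is diagonal with positive diagonal entries, and let k ≥ 0 be an integer. Then Ω is k-banded (ω_{ij} = 0 whenever |i−j| > k) if and only if T is k-banded (t_{ij} = 0 whenever |i−j| > k). -/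
open Matrix

/-- For a positive definite `Ω = Tᵀ D⁻¹ T` (modified Cholesky decomposition
of the inverse covariance) and any integer `k ≥ 0`, `Ω` is `k`-banded iff its Cholesky
factor `T` is `k`-banded. -/
theorem inverse_cholesky_banded_iff
    (p : ℕ) (Om T D : Matrix (Fin p) (Fin p) ℝ) (k : ℕ)
    (hOm : Om.PosDef)
    (hT_lower : ∀ i j : Fin p, i < j → T i j = 0)
    (hT_diag : ∀ i : Fin p, T i i = 1)
    (hD_diag : ∀ i j : Fin p, i ≠ j → D i j = 0)
    (hD_pos : ∀ i : Fin p, 0 < D i i)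
    (hdecomp : Om = Tᵀ * D⁻¹ * T) :
    (∀ i j : Fin p, (k : ℤ) < |((i : ℕ) : ℤ) - ((j : ℕ) : ℤ)| → Om i j = 0) ↔
      (∀ i j : Fin p, (k : ℤ) < |((i : ℕ) : ℤ) - ((j : ℕ) : ℤ)| → T i j = 0) := by
  have hdne : ∀ i : Fin p, (D i i)⁻¹ ≠ 0 := fun i => inv_ne_zero (ne_of_gt (hD_pos i))
  have hDdiag : D = Matrix.diagonal (fun i => D i i) := by
    ext i j
    by_cases h : i = j
    · subst h; simp
    · simp [Matrix.diagonal_apply_ne _ h, hD_diag i j h]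
  have hDinv : D⁻¹ = Matrix.diagonal (fun i => (D i i)⁻¹) := by
    conv_lhs => rw [hDdiag, Matrix.inv_diagonal]
    letI : Invertible (fun i : Fin p => D i i) :=
      { invOf := fun i => (D i i)⁻¹
        invOf_mul_self := by
          funext i
          exact inv_mul_cancel₀ (ne_of_gt (hD_pos i))
        mul_invOf_self := by
          funext i
          exact mul_inv_cancel₀ (ne_of_gt (hD_pos i)) }
    rw [Ring.inverse_invertible]
    rfl
  have hOm_entry : ∀ i j : Fin p, Om i j = ∑ b, T b i * (D b b)⁻¹ * T b j := by
    intro i j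
    rw [hdecomp, hDinv, Matrix.mul_apply]
    simp [Matrix.mul_diagonal, Matrix.transpose_apply]
  constructor
  · intro hband
    have key : ∀ n : ℕ, ∀ i j : Fin p, p - (i : ℕ) ≤ n → (j : ℕ) + k < (i : ℕ) → T i j = 0 := by
      intro n
      induction n with
      | zero =>
        intro i j hle _
        have := i.isLt
        omega
      | succ n ih =>
        intro i j hle hlt
        have hsum : Om i j = (D i i)⁻¹ * T i j := by
          rw [hOm_entry]
          rw [Finset.sum_eq_single i]
          · rw [hT_diag]; ring
          · intro b _ hb
            rcases hb.lt_or_gt with h | h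
            · rw [hT_lower b i h]; ring
            · have hblt : (i : ℕ) < (b : ℕ) := h
              have hb0 : T b j = 0 := ih b j (by omega) (by omega)
              rw [hb0]; ring
          · intro h; exact absurd (Finset.mem_univ i) h
        have h0 : Om i j = 0 := by
          apply hband i j
          rw [lt_abs]
          left
          omega
        rw [h0] at hsum
        rcases mul_eq_zero.mp hsum.symm with h | h
        · exact absurd h (hdne i)
        · exact h
    intro i j habs
    rcases lt_abs.mp habs with h | h
    · exact key p i j (by omega) (by omega)
    · exact hT_lower i j (Fin.lt_def.mpr (by omega))
  · intro hTband i j habs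
    rw [hOm_entry]
    apply Finset.sum_eq_zero
    intro b _
    by_cases hbi : T b i = 0
    · rw [hbi]; ring
    · have h1 : ¬ ((b : ℕ) < (i : ℕ)) := fun h => hbi (hT_lower b i (Fin.lt_def.mpr h))
      have h2 : |((b : ℕ) : ℤ) - ((i : ℕ) : ℤ)| ≤ (k : ℤ) := by
        by_contra h
        exact hbi (hTband b i (not_le.mp h))
      obtain ⟨hl, hr⟩ := abs_le.mp h2
      have hbj : T b j = 0 := by
        rcases lt_abs.mp habs with h | h
        · apply hTband b j
          rw [lt_abs]; left; omega
        · exact hT_lower b j (Fin.lt_def.mpr (by omega))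
      rw [hbj]; ring
end

section
/- Let T be a real p×p lower triangular matrix with unit diagonal and let D be a real p×p diagonal matrix with strictly positive diagonal entries. Let A be a real p×p strictly lower triangular matrix (zero diagonal) and let B be a real p×p diagonal matrix. If Tᵀ D⁻¹ A + Aᵀ D⁻¹ T − Tᵀ D⁻² B T = 0, then A = 0 and B = 0. -/
open Matrix

/-- The differential of `(T, D) ↦ Tᵀ D⁻¹ T` is injective at any `T` lower
triangular with unit diagonal and `D` diagonal with positive diagonal entries: if `A` is
strictly lower triangular, `B` is diagonal, and
`Tᵀ D⁻¹ A + Aᵀ D⁻¹ T − Tᵀ D⁻² B T = 0`, then `A = 0` and `B = 0`. -/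
theorem cholesky_differential_injective
    (p : ℕ) (T D A B : Matrix (Fin p) (Fin p) ℝ)
    (hT_lower : ∀ i j : Fin p, i < j → T i j = 0)
    (hT_diag : ∀ i : Fin p, T i i = 1)
    (hD_diag : ∀ i j : Fin p, i ≠ j → D i j = 0)
    (hD_pos : ∀ i : Fin p, 0 < D i i)
    (hA_strict : ∀ i j : Fin p, i ≤ j → A i j = 0)
    (hB_diag : ∀ i j : Fin p, i ≠ j → B i j = 0)
    (h : Tᵀ * D⁻¹ * A + Aᵀ * D⁻¹ * T - Tᵀ * (D⁻¹ * D⁻¹) * B * T = 0) :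
    A = 0 ∧ B = 0 := by
  -- T is lower block-triangular with determinant 1, hence invertible
  have hTbt : T.BlockTriangular OrderDual.toDual := by
    intro i j hij
    exact hT_lower i j hij
  have hTdet : T.det = 1 := by
    rw [det_of_lowerTriangular T hTbt]
    simp [hT_diag]
  have hTu : IsUnit T.det := by rw [hTdet]; exact isUnit_one
  have hTtu : IsUnit Tᵀ.det := by rwa [det_transpose]
  haveI : Invertible T := T.invertibleOfIsUnitDet hTu
  haveI : Invertible Tᵀ := Tᵀ.invertibleOfIsUnitDet hTtu
  have hTinv : T⁻¹.BlockTriangular OrderDual.toDual :=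
    blockTriangular_inv_of_blockTriangular hTbt
  -- D is diagonal, so D⁻¹ is the entrywise-inverse diagonal matrix
  have hDeq : D = diagonal (fun i => D i i) := by
    ext i j
    by_cases hij : i = j
    · subst hij; simp
    · simp [diagonal, hij, hD_diag i j hij]
  have hDinv : D⁻¹ = diagonal (fun i => (D i i)⁻¹) := by
    apply inv_eq_right_inv
    ext i j
    by_cases hij : i = j
    · subst hij
      simp [mul_diagonal, mul_inv_cancel₀ (hD_pos i).ne', one_apply]
    · simp [mul_diagonal, hD_diag i j hij, one_apply, hij]
  set L := A * T⁻¹ with hLdef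
  -- L is strictly lower triangular
  have hL : ∀ i j : Fin p, i ≤ j → L i j = 0 := by
    intro i j hij
    show ∑ k, A i k * T⁻¹ k j = 0
    apply Finset.sum_eq_zero
    intro k _
    by_cases hk : k < i
    · have hkj : k < j := lt_of_lt_of_le hk hij
      have : T⁻¹ k j = 0 := hTinv hkj
      simp [this]
    · rw [hA_strict i k (le_of_not_gt hk), zero_mul]
  -- conjugate the equation by T⁻¹
  have key := congrArg (fun X => Tᵀ⁻¹ * X * T⁻¹) h
  simp only [Matrix.mul_zero, Matrix.zero_mul, Matrix.mul_sub, Matrix.mul_add,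
    Matrix.sub_mul, Matrix.add_mul, ← Matrix.mul_assoc, Matrix.inv_mul_of_invertible,
    Matrix.one_mul, Matrix.mul_inv_cancel_right_of_invertible] at key
  have hLT : Tᵀ⁻¹ * Aᵀ = Lᵀ := by
    rw [hLdef, transpose_mul, transpose_nonsing_inv]
  rw [hLT, Matrix.mul_assoc D⁻¹ A T⁻¹, ← hLdef, hDinv] at key
  -- key : D⁻¹ * A * T⁻¹ + Lᵀ * D⁻¹ - D⁻¹ * D⁻¹ * B = 0
  have hDipos : ∀ i : Fin p, (D i i)⁻¹ ≠ 0 := fun i => inv_ne_zero (hD_pos i).ne'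
  have hEentry : ∀ i j : Fin p,
      (D i i)⁻¹ * L i j + L j i * (D j j)⁻¹ - (D i i)⁻¹ * (D i i)⁻¹ * B i j = 0 := by
    intro i j
    have := congrFun (congrFun key i) j
    simpa [diagonal_mul, mul_diagonal, Matrix.add_apply, Matrix.mul_assoc,
      Matrix.sub_apply, Matrix.zero_apply, transpose_apply, mul_assoc] using this
  have hL0 : L = 0 := by
    ext i j
    rcases le_or_gt i j with hij | hij
    · simp [hL i j hij]
    · have heq := hEentry i j
      rw [hL j i hij.le, zero_mul, add_zero, hB_diag i j (ne_of_gt hij), mul_zero,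
        sub_zero] at heq
      have := (mul_eq_zero.mp heq).resolve_left (hDipos i)
      simp [this]
  have hA0 : A = 0 := by
    have : A = L * T := by
      rw [hLdef, Matrix.mul_assoc, Matrix.nonsing_inv_mul T hTu, Matrix.mul_one]
    rw [this, hL0, Matrix.zero_mul]
  refine ⟨hA0, ?_⟩
  ext i j
  by_cases hij : i = j
  · subst hij
    have heq := hEentry i i
    rw [hL0] at heq
    simp only [Matrix.zero_apply, mul_zero, zero_mul, zero_add, zero_sub, neg_eq_zero] at heq
    have h1 := (mul_eq_zero.mp heq).resolve_left (mul_ne_zero (hDipos i) (hDipos i))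
    simp [h1]
  · simp [hB_diag i j hij]
end

section
/- Let S be a real positive definite p×p matrix. Then the function f(Ω) = trace(S Ω) − log det Ω over real positive definite p×p matrices Ω attains its unique minimum at Ω = S⁻¹; that is, for every positive definite Ω with Ω ≠ S⁻¹, one has trace(S Ω) − log det Ω > trace(S S⁻¹) − log det(S⁻¹) = p + log det S. -/
open Matrix

private lemma one_lt_sub_log {x : ℝ} (hx : 0 < x) (hx1 : x ≠ 1) : 1 < x - Real.log x := by
  have := Real.log_lt_sub_one_of_pos hx hx1
  linarith

private lemma posdef_conj {n : ℕ} {A B : Matrix (Fin n) (Fin n) ℝ}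
    (hA : A.PosDef) (hB : IsUnit B) : (Bᴴ * A * B).PosDef := by
  refine PosDef.of_dotProduct_mulVec_pos ?_ ?_
  · exact isHermitian_conjTranspose_mul_mul B hA.1
  · intro x hx
    have hBx : B *ᵥ x ≠ 0 := by
      intro h
      exact hx (Matrix.mulVec_injective_iff_isUnit.mpr hB (h.trans (Matrix.mulVec_zero B).symm))
    simpa only [star_mulVec, dotProduct_mulVec, vecMul_vecMul] using hA.dotProduct_mulVec_pos hBx

/-- For a real positive definite `B ≠ 1`, `p < tr B - log det B`. -/
private lemma key {p : ℕ} {B : Matrix (Fin p) (Fin p) ℝ} (hB : B.PosDef) (hB1 : B ≠ 1) :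
    (p : ℝ) < B.trace - Real.log B.det := by
  classical
  set μ := hB.1.eigenvalues with hμ
  have hμpos : ∀ i, 0 < μ i := hB.eigenvalues_pos
  have htr : B.trace = ∑ i, μ i := by
    conv_lhs => rw [hB.1.spectral_theorem, Unitary.conjStarAlgAut_apply]
    rw [Matrix.trace_mul_cycle]
    rw [show (star (hB.1.eigenvectorUnitary : Matrix (Fin p) (Fin p) ℝ)) *
      (hB.1.eigenvectorUnitary : Matrix (Fin p) (Fin p) ℝ) = 1 from
      Unitary.coe_star_mul_self _, one_mul, Matrix.trace_diagonal]
    simp [μ]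
  have hdet : B.det = ∏ i, μ i := by
    simpa using hB.1.det_eq_prod_eigenvalues
  have hlog : Real.log B.det = ∑ i, Real.log (μ i) := by
    rw [hdet, Real.log_prod (fun i _ => (hμpos i).ne')]
  have hne : ∃ i, μ i ≠ 1 := by
    by_contra h
    push_neg at h
    apply hB1
    have : Matrix.diagonal (RCLike.ofReal ∘ μ) = (1 : Matrix (Fin p) (Fin p) ℝ) := by
      rw [show RCLike.ofReal ∘ μ = fun _ => (1 : ℝ) from funext fun i => by simp [h i],
        Matrix.diagonal_one]
    rw [hB.1.spectral_theorem, Unitary.conjStarAlgAut_apply, ← hμ, this, mul_one]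
    exact Unitary.coe_mul_star_self _
  obtain ⟨j, hj⟩ := hne
  have : (p : ℝ) = ∑ _i : Fin p, (1 : ℝ) := by simp
  rw [htr, hlog, ← Finset.sum_sub_distrib, this]
  refine Finset.sum_lt_sum (fun i _ => ?_) ⟨j, Finset.mem_univ j, ?_⟩
  · have := Real.log_le_sub_one_of_pos (hμpos i); linarith
  · exact one_lt_sub_log (hμpos j) hj

open scoped MatrixOrder in
private lemma sqrt_aux {p : ℕ} {S : Matrix (Fin p) (Fin p) ℝ} (hS : S.PosDef) :
    ∃ s : Matrix (Fin p) (Fin p) ℝ, s * s = S ∧ s.IsHermitian :=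
  ⟨CFC.sqrt S, CFC.sqrt_mul_sqrt_self S hS.posSemidef.nonneg, (CFC.sqrt_nonneg S).posSemidef.1⟩

/-- For a positive definite `S`, the function
`f(Ω) = tr(SΩ) − log det Ω` on positive definite matrices attains its unique minimum at
`Ω = S⁻¹`, with minimum value `tr(S S⁻¹) − log det (S⁻¹) = p + log det S`. -/
theorem trace_logdet_unique_minimizer
    (p : ℕ) (S : Matrix (Fin p) (Fin p) ℝ) (hS : S.PosDef) :
    ((S * S⁻¹).trace - Real.log (S⁻¹).det = (p : ℝ) + Real.log S.det) ∧
      ∀ Om : Matrix (Fin p) (Fin p) ℝ, Om.PosDef → Om ≠ S⁻¹ →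
        (p : ℝ) + Real.log S.det < (S * Om).trace - Real.log Om.det := by
  classical
  have hSu : IsUnit S.det := hS.det_pos.ne'.isUnit
  constructor
  · rw [Matrix.mul_nonsing_inv S hSu, Matrix.trace_one, Matrix.det_nonsing_inv,
      Ring.inverse_eq_inv', Real.log_inv]
    simp [sub_neg_eq_add]
  · intro Om hOm hOmne
    obtain ⟨s, hss, hsherm⟩ := sqrt_aux hS
    have hsdet : s.det * s.det = S.det := by rw [← Matrix.det_mul, hss]
    have hsdet_ne : s.det ≠ 0 := by
      intro h; rw [h, mul_zero] at hsdet; exact hS.det_pos.ne' hsdet.symm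
    have hsu : IsUnit s := (Matrix.isUnit_iff_isUnit_det s).mpr hsdet_ne.isUnit
    set B := s * Om * s with hB
    have hBpos : B.PosDef := by
      have := posdef_conj hOm hsu
      rwa [hsherm.eq] at this
    have hBne : B ≠ 1 := by
      intro h
      apply hOmne
      have h1 : Om = s⁻¹ * (s * Om * s) * s⁻¹ := by
        rw [← mul_assoc, ← mul_assoc, Matrix.nonsing_inv_mul s hsdet_ne.isUnit, one_mul,
          mul_assoc, Matrix.mul_nonsing_inv s hsdet_ne.isUnit, mul_one]
      rw [h1, ← hB, h, mul_one, ← Matrix.mul_inv_rev, hss]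
    have htr : (S * Om).trace = B.trace := by
      rw [hB, ← hss, Matrix.trace_mul_cycle, Matrix.trace_mul_cycle]
    have hdet : B.det = S.det * Om.det := by
      rw [hB, Matrix.det_mul, Matrix.det_mul, ← hsdet]; ring
    have hlog : Real.log B.det = Real.log S.det + Real.log Om.det := by
      rw [hdet, Real.log_mul hS.det_pos.ne' hOm.det_pos.ne']
    have := key hBpos hBne
    rw [htr]
    rw [hlog] at this
    linarith
end

section
/- Banding the modified Cholesky factor of the inverse is the constrained maximum likelihood estimator: Let X be a real n×p matrix with columns x₁, …, x_p ∈ ℝⁿ, let Σ̂ = (1/n)XᵀX, and fix an integer k ≥ 1. For each j = 2, …, p, suppose the matrix with columns x_{max(1,j−k)}, …, x_{j−1} has full column rank, let (−t̂_{j,max(1,j−k)}, …, −t̂_{j,j−1}) be its least squares coefficients for response x_j (minimizing ‖x_j − Σ_{v=max(1,j−k)}^{j−1} β_v x_v‖² over β), and suppose the residual r_j = x_j + Σ_{v=max(1,j−k)}^{j−1} t̂_{jv} x_v is nonzero; suppose also x₁ ≠ 0. Let T̂ be the lower triangular matrix with unit diagonal, entries t̂_{jv} for max(1,j−k) ≤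 v < j, and zeros elsewhere; let D̂ be diagonal with d̂_{11} = ‖x₁‖²/n and d̂_{jj} = ‖r_j‖²/n. Then Ω̂ = T̂ᵀ D̂⁻¹ T̂ minimizes f(Ω) = trace(Σ̂ Ω) − log det Ω over all real positive definite p×p matrices Ω satisfying ω_{ij} = 0 for all |i−j| > k. -/
open Matrix

/-- The band of predecessors used in the `k`-banded regression for variable `j`
(0-based): indices `v` with `max(0, j−k) ≤ v < j`. -/
def cholBand (p k : ℕ) (j : Fin p) : Finset (Fin p) :=
  Finset.univ.filter fun v : Fin p => v < j ∧ (j : ℕ) ≤ (v : ℕ) + k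

/-- The residual of the banded regression of column `j` of `X` on its band of
predecessor columns, with (negated) coefficients taken from row `j` of `T`. -/
def bandResid {n p : ℕ} (k : ℕ) (X : Matrix (Fin n) (Fin p) ℝ)
    (T : Matrix (Fin p) (Fin p) ℝ) (j : Fin p) : Fin n → ℝ :=
  fun i => X i j + ∑ v ∈ cholBand p k j, T j v * X i v

namespace MLEAux

variable {m : Type*} [Fintype m] [DecidableEq m]

lemma posDef_conj {A B : Matrix m m ℝ} (hA : A.PosDef) (hB : IsUnit B.det) :
    (Bᵀ * A * B).PosDef := by
  have hBt : Bᵀ = Bᴴ := (conjTranspose_eq_transpose_of_trivial B).symm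
  rw [posDef_iff_dotProduct_mulVec]
  constructor
  · rw [hBt]; exact isHermitian_conjTranspose_mul_mul B hA.1
  · intro x hx
    have hBx : B *ᵥ x ≠ 0 := by
      intro h
      exact hx (Matrix.mulVec_injective_iff_isUnit.mpr
        ((Matrix.isUnit_iff_isUnit_det B).mpr hB) (by simpa using h))
    have hpos := hA.dotProduct_mulVec_pos hBx
    have : star x ⬝ᵥ ((Bᵀ * A * B) *ᵥ x) = star (B *ᵥ x) ⬝ᵥ (A *ᵥ (B *ᵥ x)) := by
      simp only [star_trivial, ← mulVec_mulVec]
      rw [dotProduct_mulVec, vecMul_transpose]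
    rw [this]
    exact hpos

lemma trace_eq_sum_eigenvalues {A : Matrix m m ℝ} (hA : A.IsHermitian) :
    A.trace = ∑ i, hA.eigenvalues i := by
  rw [hA.trace_eq_sum_eigenvalues]
  simp

lemma log_det_le_trace_sub_card {A : Matrix m m ℝ} (hA : A.PosDef) :
    Real.log A.det ≤ A.trace - Fintype.card m := by
  rw [hA.isHermitian.det_eq_prod_eigenvalues, trace_eq_sum_eigenvalues hA.isHermitian]
  have h1 : Real.log (∏ i, hA.isHermitian.eigenvalues i)
      = ∑ i, Real.log (hA.isHermitian.eigenvalues i) :=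
    Real.log_prod (fun i _ => (hA.eigenvalues_pos i).ne')
  simp only [RCLike.ofReal_real_eq_id, id_eq]
  rw [h1]
  have h2 : ∀ i ∈ Finset.univ, Real.log (hA.isHermitian.eigenvalues i)
      ≤ hA.isHermitian.eigenvalues i - 1 :=
    fun i _ => Real.log_le_sub_one_of_pos (hA.eigenvalues_pos i)
  calc ∑ i, Real.log (hA.isHermitian.eigenvalues i)
      ≤ ∑ i, (hA.isHermitian.eigenvalues i - 1) := Finset.sum_le_sum h2
    _ = (∑ i, hA.isHermitian.eigenvalues i) - Fintype.card m := by
        rw [Finset.sum_sub_distrib]; simp [Finset.card_univ]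

open scoped MatrixOrder in
/-- convexity inequality for log det -/
lemma log_det_sub_le {A B : Matrix m m ℝ} (hA : A.PosDef) (hB : B.PosDef) :
    Real.log B.det - Real.log A.det ≤ (A⁻¹ * B).trace - Fintype.card m := by
  have hAinv : A⁻¹.PosDef := hA.inv
  set Q := CFC.sqrt A⁻¹ with hQdef
  have hQpsd : Q.PosSemidef := Matrix.nonneg_iff_posSemidef.mp (CFC.sqrt_nonneg _)
  have hQQ : Q * Q = A⁻¹ := CFC.sqrt_mul_sqrt_self A⁻¹ hAinv.posSemidef.nonneg
  have hQherm : Qᵀ = Q := by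
    have := hQpsd.isHermitian
    rwa [IsHermitian, conjTranspose_eq_transpose_of_trivial] at this
  have hQdet : IsUnit Q.det := by
    have hq : Q.det * Q.det = A⁻¹.det := by rw [← det_mul, hQQ]
    have hd : A⁻¹.det ≠ 0 := hAinv.det_pos.ne'
    have : Q.det ≠ 0 := fun h => hd (by rw [← hq, h, mul_zero])
    exact isUnit_iff_ne_zero.mpr this
  have hC : (Q * B * Q).PosDef := by
    have := posDef_conj hB hQdet
    rwa [hQherm] at this
  have htr : (Q * B * Q).trace = (A⁻¹ * B).trace := by
    rw [Matrix.trace_mul_comm, ← mul_assoc, hQQ]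
  have hdet : (Q * B * Q).det = A⁻¹.det * B.det := by
    rw [det_mul, det_mul, mul_comm Q.det, mul_assoc, ← det_mul, hQQ, mul_comm]
  have hlog := log_det_le_trace_sub_card hC
  rw [htr, hdet] at hlog
  have hlogmul : Real.log (A⁻¹.det * B.det) = Real.log A⁻¹.det + Real.log B.det :=
    Real.log_mul hAinv.det_pos.ne' hB.det_pos.ne'
  have hinvdet : A⁻¹.det = A.det⁻¹ := by
    rw [det_nonsing_inv, Ring.inverse_eq_inv]
  rw [hlogmul, hinvdet, Real.log_inv] at hlog
  linarith

end MLEAux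

/-- Banding the modified Cholesky factor of the inverse covariance is the
constrained maximum likelihood estimator: if `T̂` carries the (negated) least squares
coefficients of each column `x_j` on its `k` immediate predecessor columns, and `D̂` the
corresponding residual variances, then `Ω̂ = T̂ᵀ D̂⁻¹ T̂` is positive definite, `k`-banded,
and minimizes `f(Ω) = tr(Σ̂Ω) − log det Ω` over all positive definite `k`-banded `Ω`,
where `Σ̂ = (1/n)XᵀX`. -/
theorem inverse_cholesky_banding_is_constrained_mle
    (n p k : ℕ) (hn : 0 < n) (hp : 0 < p) (hk : 1 ≤ k)
    (X : Matrix (Fin n) (Fin p) ℝ)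
    (That Dhat : Matrix (Fin p) (Fin p) ℝ)
    -- `T̂` is lower triangular with unit diagonal, supported on the band
    (hT_diag : ∀ j : Fin p, That j j = 1)
    (hT_zero : ∀ j v : Fin p, v ≠ j → v ∉ cholBand p k j → That j v = 0)
    -- the banded design matrices have full column rank
    (hrank : ∀ j : Fin p,
      LinearIndependent ℝ fun v : {v : Fin p // v ∈ cholBand p k j} =>
        (fun i : Fin n => X i v.1))
    -- the entries of `T̂` are (negated) least squares coefficients
    (hls : ∀ j : Fin p, 0 < (j : ℕ) → ∀ β : Fin p → ℝ,
      ∑ i : Fin n, (bandResid k X That j i) ^ 2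
        ≤ ∑ i : Fin n, (X i j - ∑ v ∈ cholBand p k j, β v * X i v) ^ 2)
    -- the residuals are nonzero, and the first column of `X` is nonzero
    (hres : ∀ j : Fin p, 0 < (j : ℕ) → 0 < ∑ i : Fin n, (bandResid k X That j i) ^ 2)
    (hx1 : 0 < ∑ i : Fin n, (X i ⟨0, hp⟩) ^ 2)
    -- `D̂` is diagonal, with the residual variances on the diagonal
    (hD_diag : ∀ i j : Fin p, i ≠ j → Dhat i j = 0)
    (hD_first : Dhat ⟨0, hp⟩ ⟨0, hp⟩ = (∑ i : Fin n, (X i ⟨0, hp⟩) ^ 2) / n)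
    (hD_rest : ∀ j : Fin p, 0 < (j : ℕ) →
      Dhat j j = (∑ i : Fin n, (bandResid k X That j i) ^ 2) / n) :
    (Thatᵀ * Dhat⁻¹ * That).PosDef ∧
      (∀ i j : Fin p, (k : ℤ) < |((i : ℕ) : ℤ) - ((j : ℕ) : ℤ)| →
        (Thatᵀ * Dhat⁻¹ * That) i j = 0) ∧
      ∀ Om : Matrix (Fin p) (Fin p) ℝ, Om.PosDef →
        (∀ i j : Fin p, (k : ℤ) < |((i : ℕ) : ℤ) - ((j : ℕ) : ℤ)| → Om i j = 0) →
        ((((1 : ℝ) / n) • (Xᵀ * X)) * (Thatᵀ * Dhat⁻¹ * That)).trace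
            - Real.log (Thatᵀ * Dhat⁻¹ * That).det
          ≤ ((((1 : ℝ) / n) • (Xᵀ * X)) * Om).trace - Real.log Om.det := by
  classical
  set Sig := (((1 : ℝ) / n) • (Xᵀ * X)) with hSig
  set Omh := Thatᵀ * Dhat⁻¹ * That with hOmh
  set d : Fin p → ℝ := fun j => Dhat j j with hd
  have hnR : (0 : ℝ) < n := by exact_mod_cast hn
  have hband_mem : ∀ (j v : Fin p), v ∈ cholBand p k j ↔ (v < j ∧ (j : ℕ) ≤ (v : ℕ) + k) := by
    intro j v; simp [cholBand]
  have hDdiag : Dhat = Matrix.diagonal d := by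
    ext i j
    by_cases h : i = j
    · subst h; simp [hd]
    · rw [Matrix.diagonal_apply_ne _ h]; exact hD_diag i j h
  have hdpos : ∀ j, 0 < d j := by
    intro j
    by_cases hj : 0 < (j : ℕ)
    · rw [hd]; simp only; rw [hD_rest j hj]; exact div_pos (hres j hj) hnR
    · have hj0 : j = ⟨0, hp⟩ := Fin.ext (by show (j : ℕ) = 0; omega)
      rw [hd]; simp only; rw [hj0, hD_first]; exact div_pos hx1 hnR
  have hDinv : Dhat⁻¹ = Matrix.diagonal (fun j => (d j)⁻¹) := by
    apply Matrix.inv_eq_right_inv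
    rw [hDdiag, Matrix.diagonal_mul_diagonal]
    have hone : (fun i => d i * (d i)⁻¹) = fun _ => (1 : ℝ) :=
      funext fun j => mul_inv_cancel₀ (hdpos j).ne'
    rw [hone]
    exact Matrix.diagonal_one
  have hDinvPD : Dhat⁻¹.PosDef := by
    rw [hDinv]; exact Matrix.posDef_diagonal_iff.mpr (fun j => inv_pos.mpr (hdpos j))
  have hDdetu : IsUnit Dhat.det := by
    rw [hDdiag, Matrix.det_diagonal]
    exact isUnit_iff_ne_zero.mpr (ne_of_gt (Finset.prod_pos (fun j _ => hdpos j)))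
  -- triangularity of That
  have hT_lower : ∀ i j : Fin p, i < j → That i j = 0 := by
    intro i j hij
    refine hT_zero i j (ne_of_gt hij) ?_
    rw [hband_mem]
    rintro ⟨h1, _⟩
    exact absurd hij (not_lt.mpr (le_of_lt h1))
  have hT_supp : ∀ l i : Fin p, That l i ≠ 0 → (i : ℕ) ≤ (l : ℕ) ∧ (l : ℕ) ≤ (i : ℕ) + k := by
    intro l i h
    by_contra hc
    apply h
    have hne : i ≠ l := by
      intro he; subst he
      exact hc ⟨le_rfl, Nat.le_add_right _ _⟩
    refine hT_zero l i hne ?_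
    rw [hband_mem]
    rintro ⟨h1, h2⟩
    have h1' : (i : ℕ) < (l : ℕ) := h1
    exact hc ⟨le_of_lt h1', h2⟩
  have hTtri : That.BlockTriangular OrderDual.toDual := by
    intro i j hij
    exact hT_lower i j hij
  have hTdet : That.det = 1 := by
    rw [Matrix.det_of_lowerTriangular That hTtri]
    simp [hT_diag]
  have hTunit : IsUnit That.det := by rw [hTdet]; exact isUnit_one
  have hTtunit : IsUnit Thatᵀ.det := by rwa [Matrix.det_transpose]
  -- positive definiteness
  have hOmhPD : Omh.PosDef := MLEAux.posDef_conj hDinvPD hTunit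
  -- bandedness
  have hOmh_band : ∀ i j : Fin p, (k : ℤ) < |((i : ℕ) : ℤ) - ((j : ℕ) : ℤ)| → Omh i j = 0 := by
    intro i j hij
    rw [hOmh, Matrix.mul_assoc, Matrix.mul_apply]
    apply Finset.sum_eq_zero
    intro l _
    rw [Matrix.transpose_apply]
    rcases eq_or_ne (That l i) 0 with h | h
    · rw [h, zero_mul]
    rcases eq_or_ne (That l j) 0 with h2 | h2
    · rw [hDinv, Matrix.diagonal_mul, h2, mul_zero, mul_zero]
    · exfalso
      have ha := hT_supp l i h
      have hb := hT_supp l j h2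
      rcases abs_cases (((i : ℕ) : ℤ) - ((j : ℕ) : ℤ)) with ⟨he, _⟩ | ⟨he, _⟩ <;>
        (rw [he] at hij; omega)
  -- the inverse W
  set W := Omh⁻¹ with hW
  haveI := That.invertibleOfIsUnitDet hTunit
  have hTinvtri : BlockTriangular That⁻¹ OrderDual.toDual :=
    Matrix.blockTriangular_inv_of_blockTriangular hTtri
  have hTThatinv : That * That⁻¹ = 1 := Matrix.mul_nonsing_inv That hTunit
  have hWeq : W = That⁻¹ * (Dhat * (Thatᵀ)⁻¹) := by
    apply Matrix.inv_eq_right_inv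
    have h1 : That * (That⁻¹ * (Dhat * (Thatᵀ)⁻¹)) = Dhat * (Thatᵀ)⁻¹ := by
      rw [← Matrix.mul_assoc, hTThatinv, Matrix.one_mul]
    calc Thatᵀ * Dhat⁻¹ * That * (That⁻¹ * (Dhat * (Thatᵀ)⁻¹))
        = Thatᵀ * Dhat⁻¹ * (That * (That⁻¹ * (Dhat * (Thatᵀ)⁻¹))) := by
          rw [Matrix.mul_assoc]
      _ = Thatᵀ * (Dhat⁻¹ * (Dhat * (Thatᵀ)⁻¹)) := by rw [h1, Matrix.mul_assoc]
      _ = Thatᵀ * (Thatᵀ)⁻¹ := by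
          rw [← Matrix.mul_assoc Dhat⁻¹ Dhat, Matrix.nonsing_inv_mul Dhat hDdetu,
            Matrix.one_mul]
      _ = 1 := Matrix.mul_nonsing_inv _ hTtunit
  have hTW : That * W = Dhat * (Thatᵀ)⁻¹ := by
    rw [hWeq, ← Matrix.mul_assoc, hTThatinv, Matrix.one_mul]
  have hTWlow : ∀ j mm : Fin p, mm < j → (That * W) j mm = 0 := by
    intro j mm h
    rw [hTW, ← Matrix.transpose_nonsing_inv, hDdiag, Matrix.diagonal_mul,
      Matrix.transpose_apply]
    have : That⁻¹ mm j = 0 := hTinvtri (show OrderDual.toDual j < OrderDual.toDual mm from h)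
    rw [this, mul_zero]
  have hTWdiag : ∀ j : Fin p, (That * W) j j = d j := by
    intro j
    have hmulD : (That * W) * Thatᵀ = Dhat := by
      rw [hTW, Matrix.mul_assoc, Matrix.nonsing_inv_mul _ hTtunit, Matrix.mul_one]
    have hentry : ∑ mm, (That * W) j mm * Thatᵀ mm j = Dhat j j := by
      rw [← Matrix.mul_apply, hmulD]
    have hs : ∑ mm, (That * W) j mm * Thatᵀ mm j = (That * W) j j * Thatᵀ j j := by
      refine Finset.sum_eq_single j ?_ (by simp)
      intro b _ hb
      rcases lt_or_gt_of_ne hb with hlt | hgt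
      · rw [hTWlow j b hlt, zero_mul]
      · rw [Matrix.transpose_apply, hT_lower j b hgt, mul_zero]
    rw [hs, Matrix.transpose_apply, hT_diag, mul_one] at hentry
    rw [hentry, hd]
  -- least squares orthogonality
  have horth : ∀ j : Fin p, 0 < (j : ℕ) → ∀ mm ∈ cholBand p k j,
      ∑ i, bandResid k X That j i * X i mm = 0 := by
    intro j hj mm hmm
    set c := ∑ i, bandResid k X That j i * X i mm with hc
    set b := ∑ i, (X i mm) ^ 2 with hb
    have hbnn : 0 ≤ b := Finset.sum_nonneg fun i _ => sq_nonneg _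
    have key : ∀ ε : ℝ, 0 ≤ 2 * ε * c + ε ^ 2 * b := by
      intro ε
      have h := hls j hj (fun v => -That j v - if v = mm then ε else 0)
      have hexp : ∀ i : Fin n, X i j - ∑ v ∈ cholBand p k j,
          (-That j v - if v = mm then ε else 0) * X i v
          = bandResid k X That j i + ε * X i mm := by
        intro i
        have h1 : ∀ v, (-That j v - if v = mm then ε else 0) * X i v
            = -(That j v * X i v) - (if v = mm then ε * X i v else 0) := by
          intro v; split_ifs <;> ring
        rw [Finset.sum_congr rfl (fun v _ => h1 v), Finset.sum_sub_distrib,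
          Finset.sum_neg_distrib, Finset.sum_ite_eq' (cholBand p k j) mm, if_pos hmm]
        simp only [bandResid]
        ring
      have hrhs : ∑ i, (bandResid k X That j i + ε * X i mm) ^ 2
          = (∑ i, (bandResid k X That j i) ^ 2) + 2 * ε * c + ε ^ 2 * b := by
        have h2 : ∀ i : Fin n, (bandResid k X That j i + ε * X i mm) ^ 2
            = (bandResid k X That j i) ^ 2
              + 2 * ε * (bandResid k X That j i * X i mm) + ε ^ 2 * (X i mm) ^ 2 :=
          fun i => by ring
        rw [Finset.sum_congr rfl (fun i _ => h2 i), Finset.sum_add_distrib,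
          Finset.sum_add_distrib, ← Finset.mul_sum, ← Finset.mul_sum, hc, hb]
      have hle : ∑ i, (bandResid k X That j i) ^ 2
          ≤ (∑ i, (bandResid k X That j i) ^ 2) + 2 * ε * c + ε ^ 2 * b := by
        rw [← hrhs]
        refine le_trans h (le_of_eq ?_)
        exact Finset.sum_congr rfl fun i _ => by rw [hexp i]
      linarith
    have h := key (-c / (b + 1))
    have hb1 : (0 : ℝ) < b + 1 := by linarith
    have heq : 2 * (-c / (b + 1)) * c + (-c / (b + 1)) ^ 2 * b
        = -(c ^ 2 * (b + 2)) / (b + 1) ^ 2 := by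
      field_simp
      ring
    rw [heq] at h
    have h2 : 0 ≤ -(c ^ 2 * (b + 2)) := by
      have h3 := mul_nonneg h (sq_nonneg (b + 1))
      rwa [div_mul_cancel₀ _ (by positivity : ((b : ℝ) + 1) ^ 2 ≠ 0)] at h3
    have hc2 : c ^ 2 ≤ 0 := by nlinarith
    have : c ^ 2 = 0 := le_antisymm hc2 (sq_nonneg c)
    exact pow_eq_zero_iff (by norm_num) |>.mp this
  -- row expansion
  have hnotmem : ∀ j : Fin p, j ∉ cholBand p k j := by
    intro j h; rw [hband_mem] at h; exact lt_irrefl j h.1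
  have hrowsum : ∀ (j : Fin p) (g : Fin p → ℝ),
      ∑ v, That j v * g v = g j + ∑ v ∈ cholBand p k j, That j v * g v := by
    intro j g
    have hz : ∀ v ∈ Finset.univ, v ∉ insert j (cholBand p k j) → That j v * g v = 0 := by
      intro v _ hv
      simp only [Finset.mem_insert, not_or] at hv
      rw [hT_zero j v hv.1 hv.2, zero_mul]
    rw [← Finset.sum_subset (Finset.subset_univ (insert j (cholBand p k j))) hz,
      Finset.sum_insert (hnotmem j), hT_diag, one_mul]
  -- Sig entries
  have hSig_apply : ∀ a b : Fin p, Sig a b = (1 / n) * ∑ i, X i a * X i b := by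
    intro a b
    rw [hSig, Matrix.smul_apply, Matrix.mul_apply]
    simp [Matrix.transpose_apply]
  have hTS : ∀ j mm : Fin p, (That * Sig) j mm
      = (1 / (n : ℝ)) * ∑ i, bandResid k X That j i * X i mm := by
    intro j mm
    have hres_eq : ∀ i : Fin n, bandResid k X That j i * X i mm
        = (∑ v, That j v * X i v) * X i mm := by
      intro i
      congr 1
      rw [hrowsum j (fun v => X i v)]
      simp only [bandResid]
    have hL : (That * Sig) j mm = ∑ v, (1 / (n : ℝ)) * ∑ i, That j v * X i v * X i mm := by
      rw [Matrix.mul_apply]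
      refine Finset.sum_congr rfl fun v _ => ?_
      rw [hSig_apply]
      simp only [Finset.mul_sum]
      exact Finset.sum_congr rfl fun i _ => by ring
    have hR : (1 / (n : ℝ)) * ∑ i, bandResid k X That j i * X i mm
        = ∑ v, (1 / (n : ℝ)) * ∑ i, That j v * X i v * X i mm := by
      simp only [hres_eq, Finset.sum_mul, Finset.mul_sum]
      rw [Finset.sum_comm]
    rw [hL, ← hR]
  have hTS_band : ∀ j : Fin p, ∀ mm ∈ cholBand p k j, (That * Sig) j mm = 0 := by
    intro j mm hmm
    have hj : 0 < (j : ℕ) := by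
      rw [hband_mem] at hmm
      have : (mm : ℕ) < (j : ℕ) := hmm.1
      omega
    rw [hTS, horth j hj mm hmm, mul_zero]
  have hTS_diag : ∀ j : Fin p, (That * Sig) j j = d j := by
    intro j
    rw [hTS]
    by_cases hj : 0 < (j : ℕ)
    · have hxij : ∀ i : Fin n, X i j
          = bandResid k X That j i - ∑ v ∈ cholBand p k j, That j v * X i v := by
        intro i; simp only [bandResid]; ring
      have hper : ∀ i : Fin n, bandResid k X That j i * X i j
          = (bandResid k X That j i) ^ 2
            - ∑ v ∈ cholBand p k j, That j v * (bandResid k X That j i * X i v) := by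
        intro i
        have hswap : ∑ v ∈ cholBand p k j, That j v * (bandResid k X That j i * X i v)
            = bandResid k X That j i * ∑ v ∈ cholBand p k j, That j v * X i v := by
          rw [Finset.mul_sum]
          exact Finset.sum_congr rfl fun v _ => by ring
        rw [hswap, hxij i]
        ring
      have hsq : ∑ i, bandResid k X That j i * X i j
          = ∑ i, (bandResid k X That j i) ^ 2 := by
        rw [Finset.sum_congr rfl (fun i _ => hper i), Finset.sum_sub_distrib]
        have hzero : ∑ i, ∑ v ∈ cholBand p k j,
            That j v * (bandResid k X That j i * X i v) = 0 := by
          rw [Finset.sum_comm]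
          refine Finset.sum_eq_zero fun v hv => ?_
          have : ∑ i, That j v * (bandResid k X That j i * X i v)
              = That j v * ∑ i, bandResid k X That j i * X i v := by
            rw [Finset.mul_sum]
          rw [this, horth j hj v hv, mul_zero]
        rw [hzero, sub_zero]
      rw [hsq, hd]
      simp only
      rw [hD_rest j hj]
      ring
    · have hj0 : j = ⟨0, hp⟩ := Fin.ext (by show (j : ℕ) = 0; omega)
      have hbe : cholBand p k j = ∅ := by
        refine Finset.eq_empty_iff_forall_notMem.mpr fun v hv => ?_
        rw [hband_mem] at hv
        have : (v : ℕ) < (j : ℕ) := hv.1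
        omega
      have hres0 : ∀ i, bandResid k X That j i = X i j := by
        intro i; simp only [bandResid, hbe]; simp
      rw [Finset.sum_congr rfl (fun i _ => by rw [hres0 i, ← sq])]
      rw [hd]
      simp only
      rw [hj0, hD_first]
      ring
  -- E = W - Sig
  set E := W - Sig with hE
  have hTE : ∀ j mm : Fin p, (mm : ℕ) ≤ (j : ℕ) → (j : ℕ) ≤ (mm : ℕ) + k →
      (That * E) j mm = 0 := by
    intro j mm h1 h2
    have hsplit : (That * E) j mm = (That * W) j mm - (That * Sig) j mm := by
      rw [hE, Matrix.mul_sub, Matrix.sub_apply]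
    rw [hsplit]
    rcases eq_or_lt_of_le h1 with heq | hlt
    · have hmmj : mm = j := Fin.ext heq
      subst hmmj
      rw [hTWdiag, hTS_diag, sub_self]
    · have hltF : mm < j := hlt
      have hmem : mm ∈ cholBand p k j := by rw [hband_mem]; exact ⟨hltF, h2⟩
      rw [hTWlow j mm hltF, hTS_band j mm hmem, sub_self]
  -- symmetry
  have hSigsymm : ∀ a b : Fin p, Sig a b = Sig b a := by
    intro a b
    rw [hSig_apply, hSig_apply]
    congr 1
    exact Finset.sum_congr rfl fun i _ => mul_comm _ _
  have hOmhsymm : Omhᵀ = Omh := by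
    have := hOmhPD.isHermitian
    rwa [IsHermitian, conjTranspose_eq_transpose_of_trivial] at this
  have hWsymm : ∀ a b : Fin p, W a b = W b a := by
    have h1 : Wᵀ = W := by
      rw [hW, Matrix.transpose_nonsing_inv, hOmhsymm]
    intro a b
    have h2 : Wᵀ b a = W b a := by rw [h1]
    rwa [Matrix.transpose_apply] at h2
  have hEsymm : ∀ a b : Fin p, E a b = E b a := by
    intro a b
    rw [hE]
    simp only [Matrix.sub_apply]
    rw [hWsymm a b, hSigsymm a b]
  -- expansion of (That * E)
  have hTEexpand : ∀ j mm : Fin p,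
      (That * E) j mm = E j mm + ∑ v ∈ cholBand p k j, That j v * E v mm := by
    intro j mm
    rw [Matrix.mul_apply, hrowsum j (fun v => E v mm)]
  -- key induction: E vanishes on the band
  have hEzero : ∀ N : ℕ, ∀ j mm : Fin p, (j : ℕ) = N → (mm : ℕ) ≤ (j : ℕ) →
      (j : ℕ) ≤ (mm : ℕ) + k → E j mm = 0 := by
    intro N
    induction N using Nat.strong_induction_on with
    | _ N ih =>
      intro j mm hjN h1 h2
      have hoff : ∀ m' : Fin p, m' ∈ cholBand p k j → E j m' = 0 := by
        intro m' hm'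
        have hm'' := hm'
        rw [hband_mem] at hm''
        obtain ⟨hm'lt, hm'k⟩ := hm''
        have hm'lt' : (m' : ℕ) < (j : ℕ) := hm'lt
        have h0 : (That * E) j m' = 0 := hTE j m' (le_of_lt hm'lt') hm'k
        rw [hTEexpand] at h0
        have hsum0 : ∑ v ∈ cholBand p k j, That j v * E v m' = 0 := by
          refine Finset.sum_eq_zero fun v hv => ?_
          rw [hband_mem] at hv
          obtain ⟨hvlt, hvk⟩ := hv
          have hvlt' : (v : ℕ) < (j : ℕ) := hvlt
          have hEvm : E v m' = 0 := by
            rcases le_total (m' : ℕ) (v : ℕ) with hle | hle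
            · exact ih (v : ℕ) (by omega) v m' rfl hle (by omega)
            · rw [hEsymm]; exact ih (m' : ℕ) (by omega) m' v rfl hle (by omega)
          rw [hEvm, mul_zero]
        rw [hsum0, add_zero] at h0
        exact h0
      rcases eq_or_lt_of_le h1 with heq | hlt
      · have hmmj : mm = j := Fin.ext heq
        subst hmmj
        have h0 : (That * E) mm mm = 0 := hTE mm mm le_rfl (by omega)
        rw [hTEexpand] at h0
        have hsum0 : ∑ v ∈ cholBand p k mm, That mm v * E v mm = 0 := by
          refine Finset.sum_eq_zero fun v hv => ?_
          rw [hEsymm, hoff v hv, mul_zero]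
        rw [hsum0, add_zero] at h0
        exact h0
      · have hltF : mm < j := hlt
        exact hoff mm (by rw [hband_mem]; exact ⟨hltF, h2⟩)
  have hEband : ∀ a b : Fin p, |((a : ℕ) : ℤ) - ((b : ℕ) : ℤ)| ≤ (k : ℤ) → E a b = 0 := by
    intro a b hab
    rcases le_total (b : ℕ) (a : ℕ) with h | h
    · refine hEzero (a : ℕ) a b rfl h ?_
      rcases abs_cases (((a : ℕ) : ℤ) - ((b : ℕ) : ℤ)) with ⟨he, _⟩ | ⟨he, _⟩ <;>
        (rw [he] at hab; omega)
    · rw [hEsymm]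
      refine hEzero (b : ℕ) b a rfl h ?_
      rcases abs_cases (((a : ℕ) : ℤ) - ((b : ℕ) : ℤ)) with ⟨he, _⟩ | ⟨he, _⟩ <;>
        (rw [he] at hab; omega)
  -- trace identity
  have htrace : ∀ M : Matrix (Fin p) (Fin p) ℝ,
      (∀ a b : Fin p, (k : ℤ) < |((a : ℕ) : ℤ) - ((b : ℕ) : ℤ)| → M a b = 0) →
      (E * M).trace = 0 := by
    intro M hM
    rw [Matrix.trace]
    refine Finset.sum_eq_zero fun i _ => ?_
    rw [Matrix.diag_apply, Matrix.mul_apply]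
    refine Finset.sum_eq_zero fun b _ => ?_
    rcases le_or_gt (|((i : ℕ) : ℤ) - ((b : ℕ) : ℤ)|) (k : ℤ) with h | h
    · rw [hEband i b h, zero_mul]
    · rw [hM b i (by rw [abs_sub_comm]; exact h), mul_zero]
  -- conclusion
  refine ⟨hOmhPD, hOmh_band, ?_⟩
  intro Om hOm hOmband
  have hMband : ∀ a b : Fin p, (k : ℤ) < |((a : ℕ) : ℤ) - ((b : ℕ) : ℤ)| →
      (Om - Omh) a b = 0 := by
    intro a b h
    rw [Matrix.sub_apply, hOmband a b h, hOmh_band a b h, sub_zero]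
  have htr0 : (E * (Om - Omh)).trace = 0 := htrace _ hMband
  have h1 : (W * (Om - Omh)).trace = (Sig * (Om - Omh)).trace := by
    have hsplit : E * (Om - Omh) = W * (Om - Omh) - Sig * (Om - Omh) := by
      rw [hE, Matrix.sub_mul]
    rw [hsplit, Matrix.trace_sub] at htr0
    linarith
  have hOmhdetu : IsUnit Omh.det := isUnit_iff_ne_zero.mpr hOmhPD.det_pos.ne'
  have hWOmh : W * Omh = 1 := Matrix.nonsing_inv_mul Omh hOmhdetu
  have htrWOmh : (W * Omh).trace = (p : ℝ) := by
    rw [hWOmh, Matrix.trace_one]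
    simp
  have hld := MLEAux.log_det_sub_le hOmhPD hOm
  rw [Fintype.card_fin] at hld
  have e1 : Sig * (Om - Omh) = Sig * Om - Sig * Omh := Matrix.mul_sub _ _ _
  have e2 : W * (Om - Omh) = W * Om - W * Omh := Matrix.mul_sub _ _ _
  rw [e1, e2, Matrix.trace_sub, Matrix.trace_sub, htrWOmh] at h1
  have hldW : Real.log Om.det - Real.log Omh.det ≤ (W * Om).trace - (p : ℝ) := hld
  linarith
end

section
/- Let x₁, x₂, x₃ ∈ ℝⁿ with x₁ ≠ 0. Define l̂₂₁ = ⟨x₁, x₂⟩/‖x₁‖², e₂ = x₂ − l̂₂₁ x₁, and suppose e₂ ≠ 0; define l̂₃₂ = ⟨e₂, x₃⟩/‖e₂‖², e₃ = x₃ − l̂₃₂ e₂, and suppose e₃ ≠ 0; set d̂₂₂ = ‖e₂‖²/n and d̂₃₃ = ‖e₃‖²/n. For fixed l₃₂, d₂₂ > 0, d₃₃ > 0, define φ(l₂₁) = ‖x₂ − l₂₁ x₁‖²/d₂₂ + ‖x₃ + l₃₂ l₂₁ x₁ − l₃₂ x₂‖²/d₃₃. Then the derivative of φ at l̂₂₁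 with l₃₂ = l̂₃₂, d₂₂ = d̂₂₂, d₃₃ = d̂₃₃ equals 2 l̂₃₂ ⟨x₁, x₃⟩ / d̂₃₃. -/
/-- In the `p = 3` counterexample, the partial derivative of the
(constrained) negative log-likelihood with respect to `l₂₁`, evaluated at the covariance
Cholesky banding solution, equals `2 l̂₃₂ ⟨x₁, x₃⟩ / d̂₃₃`. (Euclidean inner products and
squared norms are written as sums.) -/
theorem banding_partial_derivative
    (n : ℕ) (x₁ x₂ x₃ : Fin n → ℝ) (hx₁ : x₁ ≠ 0)
    (l21hat l32hat d22hat d33hat : ℝ) (e₂ e₃ : Fin n → ℝ)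
    (hl21 : l21hat = (∑ i : Fin n, x₁ i * x₂ i) / ∑ i : Fin n, (x₁ i) ^ 2)
    (he₂ : e₂ = fun i => x₂ i - l21hat * x₁ i) (he₂0 : e₂ ≠ 0)
    (hl32 : l32hat = (∑ i : Fin n, e₂ i * x₃ i) / ∑ i : Fin n, (e₂ i) ^ 2)
    (he₃ : e₃ = fun i => x₃ i - l32hat * e₂ i) (he₃0 : e₃ ≠ 0)
    (hd22 : d22hat = (∑ i : Fin n, (e₂ i) ^ 2) / n)
    (hd33 : d33hat = (∑ i : Fin n, (e₃ i) ^ 2) / n) :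
    deriv (fun l : ℝ =>
        (∑ i : Fin n, (x₂ i - l * x₁ i) ^ 2) / d22hat
          + (∑ i : Fin n, (x₃ i + l32hat * l * x₁ i - l32hat * x₂ i) ^ 2) / d33hat)
        l21hat
      = 2 * l32hat * (∑ i : Fin n, x₁ i * x₃ i) / d33hat := by
  have hS : (0:ℝ) < ∑ i : Fin n, (x₁ i) ^ 2 := by
    obtain ⟨j, hj⟩ : ∃ j, x₁ j ≠ 0 := by
      by_contra h; push_neg at h; exact hx₁ (funext h)
    exact Finset.sum_pos' (fun i _ => sq_nonneg _)
      ⟨j, Finset.mem_univ j, by positivity⟩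
  have hkey : l21hat * ∑ i : Fin n, (x₁ i) ^ 2 = ∑ i : Fin n, x₁ i * x₂ i := by
    rw [hl21, div_mul_cancel₀ _ hS.ne']
  have h1 : ∀ i : Fin n, HasDerivAt (fun l : ℝ => (x₂ i - l * x₁ i) ^ 2)
      (2 * (x₂ i - l21hat * x₁ i) ^ 1 * (-x₁ i)) l21hat := by
    intro i
    have : HasDerivAt (fun l : ℝ => x₂ i - l * x₁ i) (-x₁ i) l21hat := by
      simpa using (((hasDerivAt_id l21hat).mul_const (x₁ i)).const_sub (x₂ i))
    simpa using this.fun_pow 2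
  have h2 : ∀ i : Fin n, HasDerivAt
      (fun l : ℝ => (x₃ i + l32hat * l * x₁ i - l32hat * x₂ i) ^ 2)
      (2 * (x₃ i + l32hat * l21hat * x₁ i - l32hat * x₂ i) ^ 1 * (l32hat * x₁ i))
      l21hat := by
    intro i
    have : HasDerivAt (fun l : ℝ => x₃ i + l32hat * l * x₁ i - l32hat * x₂ i)
        (l32hat * x₁ i) l21hat := by
      have h := (((hasDerivAt_id l21hat).const_mul l32hat).mul_const (x₁ i))
      simpa using (((h.const_add (x₃ i)).sub_const (l32hat * x₂ i)))
    simpa using this.fun_pow 2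
  have hA : HasDerivAt (fun l : ℝ =>
        (∑ i : Fin n, (x₂ i - l * x₁ i) ^ 2) / d22hat
          + (∑ i : Fin n, (x₃ i + l32hat * l * x₁ i - l32hat * x₂ i) ^ 2) / d33hat)
      ((∑ i : Fin n, 2 * (x₂ i - l21hat * x₁ i) ^ 1 * (-x₁ i)) / d22hat
        + (∑ i : Fin n, 2 * (x₃ i + l32hat * l21hat * x₁ i - l32hat * x₂ i) ^ 1
            * (l32hat * x₁ i)) / d33hat) l21hat := by
    exact ((HasDerivAt.fun_sum (fun i _ => h1 i)).div_const d22hat).add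
      ((HasDerivAt.fun_sum (fun i _ => h2 i)).div_const d33hat)
  rw [hA.deriv]
  have hzero : (∑ i : Fin n, 2 * (x₂ i - l21hat * x₁ i) ^ 1 * (-x₁ i)) = 0 := by
    have e1 : (∑ i : Fin n, 2 * (x₂ i - l21hat * x₁ i) ^ 1 * (-x₁ i))
        = ∑ i : Fin n, ((-2) * (x₁ i * x₂ i) - (-2 * l21hat) * (x₁ i) ^ 2) :=
      Finset.sum_congr rfl (fun i _ => by ring)
    rw [e1, Finset.sum_sub_distrib, ← Finset.mul_sum, ← Finset.mul_sum]
    linear_combination 2 * hkey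
  have hB : (∑ i : Fin n, 2 * (x₃ i + l32hat * l21hat * x₁ i - l32hat * x₂ i) ^ 1
      * (l32hat * x₁ i))
      = 2 * l32hat * (∑ i : Fin n, x₁ i * x₃ i)
        - 2 * l32hat ^ 2 * ((∑ i : Fin n, x₁ i * x₂ i)
            - l21hat * ∑ i : Fin n, (x₁ i) ^ 2) := by
    have e2 : (∑ i : Fin n, 2 * (x₃ i + l32hat * l21hat * x₁ i - l32hat * x₂ i) ^ 1
        * (l32hat * x₁ i))
        = ∑ i : Fin n, ((2 * l32hat) * (x₁ i * x₃ i)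
            + (2 * l32hat ^ 2 * l21hat) * (x₁ i) ^ 2
            - (2 * l32hat ^ 2) * (x₁ i * x₂ i)) :=
      Finset.sum_congr rfl (fun i _ => by ring)
    rw [e2, Finset.sum_sub_distrib, Finset.sum_add_distrib, ← Finset.mul_sum,
      ← Finset.mul_sum, ← Finset.mul_sum]
    ring
  rw [hzero, hB, hkey]
  ring
end

section
/- Banding the modified Cholesky factor of the covariance matrix does not maximize the constrained normal likelihood: Let x₁, x₂, x₃ ∈ ℝⁿ with x₁ ≠ 0. Define l̂₂₁ = ⟨x₁, x₂⟩/‖x₁‖², e₂ = x₂ − l̂₂₁ x₁ ≠ 0, l̂₃₂ = ⟨e₂, x₃⟩/‖e₂‖², e₃ = x₃ − l̂₃₂ e₂ ≠ 0, d̂₁₁ = ‖x₁‖²/n, d̂₂₂ = ‖e₂‖²/n, d̂₃₃ = ‖e₃‖²/n. Define b(l₂₁, l₃₂, d₁₁, d₂₂, d₃₃) = n(log d₁₁ + log d₂₂ + log d₃₃) + ‖x₁‖²/d₁₁ + ‖x₂ − l₂₁ x₁‖²/d₂₂ + ‖x₃ + l₃₂ l₂₁ x₁ − l₃₂ x₂‖²/d₃₃.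 If l̂₃₂ · ⟨x₁, x₃⟩ ≠ 0, then there exists l₂₁ ∈ ℝ with b(l₂₁, l̂₃₂, d̂₁₁, d̂₂₂, d̂₃₃) < b(l̂₂₁, l̂₃₂, d̂₁₁, d̂₂₂, d̂₃₃); in particular the banding solution (l̂₂₁, l̂₃₂, d̂₁₁, d̂₂₂, d̂₃₃) does not minimize b. -/
private lemma quad_neg_aux (a c : ℝ) (ha : 0 < a) (hc : c ≠ 0) :
    a * (-c / (2 * a)) ^ 2 + c * (-c / (2 * a)) < 0 := by
  have ha' : a ≠ 0 := ha.ne'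
  have h : a * (-c / (2 * a)) ^ 2 + c * (-c / (2 * a)) = -(c ^ 2 / (4 * a)) := by
    field_simp; ring
  rw [h]
  have : 0 < c ^ 2 / (4 * a) := by positivity
  linarith

/-- Banding the modified Cholesky factor of the covariance does not
maximize the constrained normal likelihood: in the `p = 3` example, whenever
`l̂₃₂ ⟨x₁, x₃⟩ ≠ 0`, the banding solution `(l̂₂₁, l̂₃₂, d̂₁₁, d̂₂₂, d̂₃₃)` can be strictly
improved in the `l₂₁` coordinate, so it does not minimize the negative log-likelihood
`b`. (Euclidean inner products and squared norms are written as sums.) -/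
theorem covariance_cholesky_banding_not_mle
    (n : ℕ) (x₁ x₂ x₃ : Fin n → ℝ) (hx₁ : x₁ ≠ 0)
    (l21hat l32hat d11hat d22hat d33hat : ℝ) (e₂ e₃ : Fin n → ℝ)
    (hl21 : l21hat = (∑ i : Fin n, x₁ i * x₂ i) / ∑ i : Fin n, (x₁ i) ^ 2)
    (he₂ : e₂ = fun i => x₂ i - l21hat * x₁ i) (he₂0 : e₂ ≠ 0)
    (hl32 : l32hat = (∑ i : Fin n, e₂ i * x₃ i) / ∑ i : Fin n, (e₂ i) ^ 2)
    (he₃ : e₃ = fun i => x₃ i - l32hat * e₂ i) (he₃0 : e₃ ≠ 0)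
    (hd11 : d11hat = (∑ i : Fin n, (x₁ i) ^ 2) / n)
    (hd22 : d22hat = (∑ i : Fin n, (e₂ i) ^ 2) / n)
    (hd33 : d33hat = (∑ i : Fin n, (e₃ i) ^ 2) / n)
    (hne : l32hat * (∑ i : Fin n, x₁ i * x₃ i) ≠ 0) :
    ∃ l : ℝ,
      ((n : ℝ) * (Real.log d11hat + Real.log d22hat + Real.log d33hat)
          + (∑ i : Fin n, (x₁ i) ^ 2) / d11hat
          + (∑ i : Fin n, (x₂ i - l * x₁ i) ^ 2) / d22hat
          + (∑ i : Fin n, (x₃ i + l32hat * l * x₁ i - l32hat * x₂ i) ^ 2) / d33hat)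
        < ((n : ℝ) * (Real.log d11hat + Real.log d22hat + Real.log d33hat)
          + (∑ i : Fin n, (x₁ i) ^ 2) / d11hat
          + (∑ i : Fin n, (x₂ i - l21hat * x₁ i) ^ 2) / d22hat
          + (∑ i : Fin n, (x₃ i + l32hat * l21hat * x₁ i - l32hat * x₂ i) ^ 2) / d33hat) := by
  classical
  set S11 := ∑ i : Fin n, (x₁ i) ^ 2 with hS11def
  set S13 := ∑ i : Fin n, x₁ i * x₃ i with hS13def
  set E2 := ∑ i : Fin n, (e₂ i) ^ 2 with hE2def
  set E3 := ∑ i : Fin n, (e₃ i) ^ 2 with hE3def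
  -- positivity facts
  obtain ⟨i₁, hi₁⟩ := Function.ne_iff.mp hx₁
  obtain ⟨i₂, hi₂⟩ := Function.ne_iff.mp he₂0
  obtain ⟨i₃, hi₃⟩ := Function.ne_iff.mp he₃0
  have hsq : ∀ (y : Fin n → ℝ) (j : Fin n), y j ≠ 0 → 0 < ∑ i : Fin n, (y i) ^ 2 := by
    intro y j hj
    refine Finset.sum_pos' (fun i _ => sq_nonneg _) ⟨j, Finset.mem_univ _, ?_⟩
    exact lt_of_le_of_ne (sq_nonneg _) (Ne.symm (pow_ne_zero 2 hj))
  have hS11 : 0 < S11 := hsq x₁ i₁ hi₁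
  have hE2 : 0 < E2 := hsq e₂ i₂ hi₂
  have hE3 : 0 < E3 := hsq e₃ i₃ hi₃
  have hn : (0 : ℝ) < n := by exact_mod_cast i₁.pos
  have hd22pos : 0 < d22hat := by rw [hd22]; positivity
  have hd33pos : 0 < d33hat := by rw [hd33]; positivity
  -- orthogonality: ∑ x₁ e₂ = 0
  have horth : ∑ i : Fin n, x₁ i * e₂ i = 0 := by
    have : ∑ i : Fin n, x₁ i * e₂ i
        = (∑ i : Fin n, x₁ i * x₂ i) - l21hat * S11 := by
      rw [he₂]
      rw [Finset.mul_sum]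
      rw [← Finset.sum_sub_distrib]
      exact Finset.sum_congr rfl fun i _ => by ring
    rw [this, hl21]
    field_simp; ring
  -- ∑ x₁ e₃ = S13
  have hxe3 : ∑ i : Fin n, x₁ i * e₃ i = S13 := by
    have : ∑ i : Fin n, x₁ i * e₃ i
        = S13 - l32hat * ∑ i : Fin n, x₁ i * e₂ i := by
      rw [he₃, Finset.mul_sum, ← Finset.sum_sub_distrib]
      exact Finset.sum_congr rfl fun i _ => by ring
    rw [this, horth]; ring
  set a := S11 / d22hat + l32hat ^ 2 * S11 / d33hat with hadef
  set c := 2 * l32hat * S13 / d33hat with hcdef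
  have ha : 0 < a := by
    rw [hadef]
    have h1 : 0 < S11 / d22hat := by positivity
    have h2 : 0 ≤ l32hat ^ 2 * S11 / d33hat := by positivity
    linarith
  have hc : c ≠ 0 := by
    rw [hcdef, show 2 * l32hat * S13 = 2 * (l32hat * S13) by ring]
    exact div_ne_zero (mul_ne_zero two_ne_zero hne) hd33pos.ne'
  set t := -c / (2 * a) with htdef
  refine ⟨l21hat + t, ?_⟩
  -- sum expansions
  have key2 : ∑ i : Fin n, (x₂ i - (l21hat + t) * x₁ i) ^ 2 = E2 + t ^ 2 * S11 := by
    have h : ∀ i : Fin n, (x₂ i - (l21hat + t) * x₁ i) ^ 2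
        = (e₂ i ^ 2 + t ^ 2 * x₁ i ^ 2) - 2 * t * (x₁ i * e₂ i) := by
      intro i; rw [he₂]; ring
    rw [Finset.sum_congr rfl fun i _ => h i, Finset.sum_sub_distrib,
      Finset.sum_add_distrib, ← Finset.mul_sum, ← Finset.mul_sum, horth]
    ring
  have key3 : ∑ i : Fin n, (x₃ i + l32hat * (l21hat + t) * x₁ i - l32hat * x₂ i) ^ 2
      = E3 + 2 * l32hat * t * S13 + l32hat ^ 2 * t ^ 2 * S11 := by
    have h : ∀ i : Fin n, (x₃ i + l32hat * (l21hat + t) * x₁ i - l32hat * x₂ i) ^ 2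
        = (e₃ i ^ 2 + l32hat ^ 2 * t ^ 2 * x₁ i ^ 2)
          + 2 * l32hat * t * (x₁ i * e₃ i) := by
      intro i; rw [he₃, he₂]; ring
    rw [Finset.sum_congr rfl fun i _ => h i, Finset.sum_add_distrib,
      Finset.sum_add_distrib, ← Finset.mul_sum, ← Finset.mul_sum, hxe3]
    ring
  have base2 : ∑ i : Fin n, (x₂ i - l21hat * x₁ i) ^ 2 = E2 := by
    rw [hE2def, he₂]
  have base3 : ∑ i : Fin n, (x₃ i + l32hat * l21hat * x₁ i - l32hat * x₂ i) ^ 2 = E3 := by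
    rw [hE3def]
    refine Finset.sum_congr rfl fun i _ => ?_
    rw [he₃, he₂]; ring
  rw [key2, key3, base2, base3]
  have hdiff : (E2 + t ^ 2 * S11) / d22hat
      + (E3 + 2 * l32hat * t * S13 + l32hat ^ 2 * t ^ 2 * S11) / d33hat
      = E2 / d22hat + E3 / d33hat + (a * t ^ 2 + c * t) := by
    rw [hadef, hcdef]; ring
  have hneg : a * t ^ 2 + c * t < 0 := by
    rw [htdef]; exact quad_neg_aux a c ha hc
  clear_value S11 S13 E2 E3 a c t
  linarith [hneg, hdiff.le, hdiff.ge]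
end

section
/- Let Σ be a real positive definite p×p matrix with modified Cholesky decomposition Σ = L D Lᵀ, where L is lower triangular with unit diagonal and D is diagonal. Suppose L has the nested zero structure: for every row j and every t with t + 1 < j, l_{j,t+1} = 0 implies l_{j,t} = 0. Then every zero of L below the diagonal is preserved in Σ: for all t < j, l_{j,t} = 0 implies σ_{j,t} = 0. -/
open Matrix

/-- If the modified Cholesky factor `L` of a positive definite
`Σ = L D Lᵀ` has the nested zero structure (within each row, `l_{j,t+1} = 0` implies
`l_{j,t} = 0`), then every below-diagonal zero of `L` is preserved in `Σ`. -/
theorem nested_zeros_preserved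
    (p : ℕ) (S L D : Matrix (Fin p) (Fin p) ℝ)
    (hS : S.PosDef)
    (hL_lower : ∀ i j : Fin p, i < j → L i j = 0)
    (hL_diag : ∀ i : Fin p, L i i = 1)
    (hD_diag : ∀ i j : Fin p, i ≠ j → D i j = 0)
    (hdecomp : S = L * D * Lᵀ)
    (hnested : ∀ j t s : Fin p, (s : ℕ) = (t : ℕ) + 1 → s < j → L j s = 0 → L j t = 0) :
    ∀ j t : Fin p, t < j → L j t = 0 → S j t = 0 := by
  intro j t htj h0
  have hzero : ∀ n : ℕ, ∀ k : Fin p, (k : ℕ) + n = (t : ℕ) → L j k = 0 := by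
    intro n
    induction n with
    | zero =>
      intro k hk
      have : k = t := Fin.ext (by omega)
      rw [this]; exact h0
    | succ n ih =>
      intro k hk
      have hk1 : (k : ℕ) + 1 < p := by have := t.isLt; omega
      refine hnested j k ⟨(k : ℕ) + 1, hk1⟩ rfl ?_ (ih ⟨(k : ℕ) + 1, hk1⟩ (by simp; omega))
      have : (k : ℕ) + 1 ≤ (t : ℕ) := by omega
      exact lt_of_le_of_lt (show (⟨(k:ℕ)+1, hk1⟩ : Fin p) ≤ t from this) htj
  have hzero' : ∀ k : Fin p, k ≤ t → L j k = 0 := fun k hk =>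
    hzero ((t : ℕ) - (k : ℕ)) k (by omega)
  rw [hdecomp]
  simp only [Matrix.mul_apply, Matrix.transpose_apply]
  apply Finset.sum_eq_zero
  intro k _
  rcases le_or_gt k t with hk | hk
  · have : (∑ m, L j m * D m k) = 0 := by
      apply Finset.sum_eq_zero
      intro m _
      rcases eq_or_ne m k with rfl | hmk
      · rw [hzero' m hk, zero_mul]
      · rw [hD_diag m k hmk, mul_zero]
    rw [this, zero_mul]
  · rw [hL_lower t k hk, mul_zero]
end
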